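/- P2 and P3 are the degenerate cases of P1: for any matrix M : Fin n → Fin m → Bool, if M contains pattern P2 (∃ i<j<k, p<q with M i p = true, M j p = false, M j q = true, M k p = true) or pattern P3 (∃ i<j, p<q<r with M i q = true, M j p = true, M j q = false, M j r = true), then the constraint digraph H of M (edges inl i → inl i' for i<i'; inr p → inr p' for p<p'; inl i → inr p when M i p = true; inr p → inl j when ∃ i<j, ∃ q>p with M i p = true, M j p = false, M j q = true) has a directed cycle of length exactly 3 through vertices of both sides. -/
import Mathlib


def StickOrder {n m : ℕ} (M : Fin n → Fin m → Bool) : Prop :=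
  ∃ (ra : Fin n → ℕ) (rb : Fin m → ℕ),
    StrictMono ra ∧ StrictMono rb ∧ (∀ i p, ra i ≠ rb p) ∧
    ∀ j p, M j p = true ↔
      (ra j < rb p ∧ (∃ q, p ≤ q ∧ M j q = true) ∧ (∃ i, i ≤ j ∧ M i p = true))

def HEdge {n m : ℕ} (M : Fin n → Fin m → Bool) :
    Fin n ⊕ Fin m → Fin n ⊕ Fin m → Prop
  | Sum.inl i, Sum.inl i' => i < i'
  | Sum.inr p, Sum.inr p' => p < p'
  | Sum.inl i, Sum.inr p => M i p = true
  | Sum.inr p, Sum.inl j =>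
      ∃ i, i < j ∧ ∃ q, p < q ∧ M i p = true ∧ M j p = false ∧ M j q = true

def P1 {n m : ℕ} (M : Fin n → Fin m → Bool) : Prop :=
  ∃ i j k : Fin n, i < j ∧ j < k ∧ ∃ p q r : Fin m, p < q ∧ q < r ∧
    M i q = true ∧ M j q = false ∧ M j r = true ∧ M k p = true

def P2 {n m : ℕ} (M : Fin n → Fin m → Bool) : Prop :=
  ∃ i j k : Fin n, i < j ∧ j < k ∧ ∃ p q : Fin m, p < q ∧
    M i p = true ∧ M j p = false ∧ M j q = true ∧ M k p = true

def P3 {n m : ℕ} (M : Fin n → Fin m → Bool) : Prop :=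
  ∃ i j : Fin n, i < j ∧ ∃ p q r : Fin m, p < q ∧ q < r ∧
    M i q = true ∧ M j p = true ∧ M j q = false ∧ M j r = true

theorem stmt_18 {n m : ℕ} (M : Fin n → Fin m → Bool)
    (h : P2 M ∨ P3 M) :
    ∃ v₁ v₂ v₃ : Fin n ⊕ Fin m,
      HEdge M v₁ v₂ ∧ HEdge M v₂ v₃ ∧ HEdge M v₃ v₁ ∧
      (v₁.isLeft ∨ v₂.isLeft ∨ v₃.isLeft) ∧
      (v₁.isRight ∨ v₂.isRight ∨ v₃.isRight) := by
  rcases h with ⟨i,j,k,hij,hjk,p,q,hpq,h1,h2,h3,h4⟩ | ⟨i,j,hij,p,q,r,hpq,hqr,h1,h2,h3,h4⟩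
  · exact ⟨Sum.inr p, Sum.inl j, Sum.inl k, ⟨i,hij,q,hpq,h1,h2,h3⟩, hjk, h4,
      Or.inr (Or.inl rfl), Or.inl rfl⟩
  · exact ⟨Sum.inr q, Sum.inl j, Sum.inr p, ⟨i,hij,r,hqr,h1,h3,h4⟩, h2, hpq,
      Or.inr (Or.inl rfl), Or.inl rfl⟩
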